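/- Let q be an odd prime power, 𝔽_q a finite field with q elements and 𝔽_{q²} a quadratic extension of 𝔽_q. Let ω ∈ 𝔽_{q²} \ 𝔽_q satisfy ω² ∈ 𝔽_q. Let χ and η be non-trivial multiplicative characters of 𝔽_q, let ψ be a non-trivial additive character of 𝔽_q, and let ρ be a multiplicative character of 𝔽_{q²}. Define S(χ,η;ρ) = Σ_{α∈𝔽_q} ρ(α+ω) Σ_{t∈𝔽_q} χ(t) η(α²−ω²t) η̄(1−t), and for t ∈ 𝔽_q set Hsum(t) = Σ_{x₁,x₂,y₁,y₂ ∈ 𝔽_q^×, x₁x₂ = t·y₁y₂} ψ(x₁+x₂−y₁−y₂) χ̄(y₁) η̄(y₂). Then q² · S(χ,η;ρ) = η(ω²) · τ(χ,ψ) · τ(η,ψ) · Σ_{α∈𝔽_q} ρ(α+ω) Hsum(1 − α²ω^{−2}). -/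

import Mathlib

open Finset

section Aux
variable {F : Type*} [Field F] [Fintype F] [DecidableEq F]

lemma sum_mulChar_mul_addChar (χ : MulChar F ℂ) (hχ : χ ≠ 1) (ψ : AddChar F ℂ) (c : F) :
    ∑ y : F, χ y * ψ (c * y) = χ⁻¹ c * gaussSum χ ψ := by
  rcases eq_or_ne c 0 with rfl | hc
  · simp [MulChar.sum_eq_zero_of_ne_one hχ, MulChar.map_zero]
  · have key : ∀ x : F, χ x * ψ (c * x) = (fun y => χ (c⁻¹ * y) * ψ y) (c * x) := by
      intro x
      simp [inv_mul_cancel_left₀ hc]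
    rw [Fintype.sum_bijective _ (mulLeft_bijective₀ c hc)
      (fun x => χ x * ψ (c * x)) (fun y => χ (c⁻¹ * y) * ψ y) key]
    simp_rw [map_mul, mul_assoc, ← Finset.mul_sum, MulChar.inv_apply']
    rfl

lemma hsum_eval (χ η : MulChar F ℂ) (hχ : χ ≠ 1) (hη : η ≠ 1)
    (ψ : AddChar F ℂ) (lam : F) (hlam : lam ≠ 0) :
    (∑ x₁ : F, ∑ x₂ : F, ∑ y₁ : F, ∑ y₂ : F,
        if x₁ ≠ 0 ∧ x₂ ≠ 0 ∧ y₁ ≠ 0 ∧ y₂ ≠ 0 ∧ x₁ * x₂ = lam * (y₁ * y₂) then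
          ψ (x₁ + x₂ - y₁ - y₂) * χ⁻¹ y₁ * η⁻¹ y₂ else 0)
      = gaussSum χ⁻¹ ψ * gaussSum η⁻¹ ψ *
          ∑ s : F, χ (s - 1) * (η (lam - s) * η⁻¹ s) := by
  have hχ' : χ⁻¹ ≠ 1 := fun h => hχ (inv_eq_one.mp h)
  have hη' : η⁻¹ ≠ 1 := fun h => hη (inv_eq_one.mp h)
  have step1 : ∀ x₁ y₁ y₂ : F,
      (∑ x₂ : F, if x₁ ≠ 0 ∧ x₂ ≠ 0 ∧ y₁ ≠ 0 ∧ y₂ ≠ 0 ∧ x₁ * x₂ = lam * (y₁ * y₂) then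
          ψ (x₁ + x₂ - y₁ - y₂) * χ⁻¹ y₁ * η⁻¹ y₂ else 0)
      = if x₁ = 0 then 0 else
          ψ (x₁ + x₁⁻¹ * (lam * (y₁ * y₂)) - y₁ - y₂) * χ⁻¹ y₁ * η⁻¹ y₂ := by
    intro x₁ y₁ y₂
    rcases eq_or_ne x₁ 0 with rfl | hx₁
    · simp
    rcases eq_or_ne y₁ 0 with rfl | hy₁
    · simp [hx₁, MulChar.map_zero]
    rcases eq_or_ne y₂ 0 with rfl | hy₂
    · simp [hx₁, MulChar.map_zero]
    rw [if_neg hx₁]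
    have hiff : ∀ x₂ : F,
        (x₁ ≠ 0 ∧ x₂ ≠ 0 ∧ y₁ ≠ 0 ∧ y₂ ≠ 0 ∧ x₁ * x₂ = lam * (y₁ * y₂)) ↔
          x₂ = x₁⁻¹ * (lam * (y₁ * y₂)) := by
      intro x₂
      constructor
      · rintro ⟨-, -, -, -, h⟩
        field_simp
        linear_combination h
      · rintro rfl
        refine ⟨hx₁, ?_, hy₁, hy₂, by field_simp⟩
        simp [hx₁, hlam, hy₁, hy₂, sub_eq_zero]
    rw [Finset.sum_congr rfl fun x₂ _ => if_congr (hiff x₂) rfl rfl,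
      Finset.sum_ite_eq' Finset.univ _
        (fun x₂ => ψ (x₁ + x₂ - y₁ - y₂) * χ⁻¹ y₁ * η⁻¹ y₂),
      if_pos (Finset.mem_univ _)]
  have step2 : ∀ y₁ y₂ : F,
      (∑ x₁ : F, if x₁ = 0 then 0 else
          ψ (x₁ + x₁⁻¹ * (lam * (y₁ * y₂)) - y₁ - y₂) * χ⁻¹ y₁ * η⁻¹ y₂)
      = ∑ s : F, if s = 0 then 0 else
          (χ⁻¹ y₁ * ψ ((s - 1) * y₁)) * (η⁻¹ y₂ * ψ ((s⁻¹ * lam - 1) * y₂)) := by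
    intro y₁ y₂
    rcases eq_or_ne y₁ 0 with rfl | hy₁
    · simp [MulChar.map_zero]
    rcases eq_or_ne y₂ 0 with rfl | hy₂
    · simp [MulChar.map_zero]
    refine (Fintype.sum_bijective (fun s : F => s * y₁)
      ((Equiv.mulRight₀ y₁ hy₁).bijective) _ _ ?_).symm
    intro s
    rcases eq_or_ne s 0 with rfl | hs
    · simp [hy₁]
    rw [if_neg hs, if_neg (mul_ne_zero hs hy₁)]
    have harg : s * y₁ + (s * y₁)⁻¹ * (lam * (y₁ * y₂)) - y₁ - y₂
        = (s - 1) * y₁ + (s⁻¹ * lam - 1) * y₂ := by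
      field_simp
      ring
    rw [harg, AddChar.map_add_eq_mul]
    ring
  have step3 : ∀ s : F,
      (∑ y₁ : F, ∑ y₂ : F, if s = 0 then 0 else
          (χ⁻¹ y₁ * ψ ((s - 1) * y₁)) * (η⁻¹ y₂ * ψ ((s⁻¹ * lam - 1) * y₂)))
      = gaussSum χ⁻¹ ψ * gaussSum η⁻¹ ψ * (χ (s - 1) * (η (lam - s) * η⁻¹ s)) := by
    intro s
    rcases eq_or_ne s 0 with rfl | hs
    · simp [MulChar.map_zero]
    simp only [if_neg hs]
    rw [← Finset.sum_mul_sum]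
    simp_rw [mul_comm (χ⁻¹ _) (ψ _), mul_comm (η⁻¹ _) (ψ _)]
    rw [show (∑ y₁ : F, ψ ((s - 1) * y₁) * χ⁻¹ y₁) = ∑ y₁ : F, χ⁻¹ y₁ * ψ ((s - 1) * y₁) by
        exact Finset.sum_congr rfl fun _ _ => mul_comm _ _,
      show (∑ y₂ : F, ψ ((s⁻¹ * lam - 1) * y₂) * η⁻¹ y₂)
          = ∑ y₂ : F, η⁻¹ y₂ * ψ ((s⁻¹ * lam - 1) * y₂) by
        exact Finset.sum_congr rfl fun _ _ => mul_comm _ _,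
      sum_mulChar_mul_addChar χ⁻¹ hχ' ψ (s - 1),
      sum_mulChar_mul_addChar η⁻¹ hη' ψ (s⁻¹ * lam - 1), inv_inv, inv_inv]
    have hη2 : η (s⁻¹ * lam - 1) = η (lam - s) * η⁻¹ s := by
      have h1 : s⁻¹ * lam - 1 = s⁻¹ * (lam - s) := by field_simp
      rw [h1, map_mul, ← MulChar.inv_apply']
      ring
    rw [hη2]
    ring
  calc
    (∑ x₁ : F, ∑ x₂ : F, ∑ y₁ : F, ∑ y₂ : F,
        if x₁ ≠ 0 ∧ x₂ ≠ 0 ∧ y₁ ≠ 0 ∧ y₂ ≠ 0 ∧ x₁ * x₂ = lam * (y₁ * y₂) then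
          ψ (x₁ + x₂ - y₁ - y₂) * χ⁻¹ y₁ * η⁻¹ y₂ else 0)
      = ∑ x₁ : F, ∑ y₁ : F, ∑ y₂ : F, ∑ x₂ : F,
          (if x₁ ≠ 0 ∧ x₂ ≠ 0 ∧ y₁ ≠ 0 ∧ y₂ ≠ 0 ∧ x₁ * x₂ = lam * (y₁ * y₂) then
            ψ (x₁ + x₂ - y₁ - y₂) * χ⁻¹ y₁ * η⁻¹ y₂ else 0) := by
        refine Finset.sum_congr rfl fun x₁ _ => ?_
        rw [Finset.sum_comm]
        exact Finset.sum_congr rfl fun y₁ _ => Finset.sum_comm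
    _ = ∑ x₁ : F, ∑ y₁ : F, ∑ y₂ : F, (if x₁ = 0 then 0 else
          ψ (x₁ + x₁⁻¹ * (lam * (y₁ * y₂)) - y₁ - y₂) * χ⁻¹ y₁ * η⁻¹ y₂) := by
        simp_rw [step1]
    _ = ∑ y₁ : F, ∑ y₂ : F, ∑ x₁ : F, (if x₁ = 0 then 0 else
          ψ (x₁ + x₁⁻¹ * (lam * (y₁ * y₂)) - y₁ - y₂) * χ⁻¹ y₁ * η⁻¹ y₂) := by
        rw [Finset.sum_comm]
        exact Finset.sum_congr rfl fun y₁ _ => Finset.sum_comm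
    _ = ∑ y₁ : F, ∑ y₂ : F, ∑ s : F, (if s = 0 then 0 else
          (χ⁻¹ y₁ * ψ ((s - 1) * y₁)) * (η⁻¹ y₂ * ψ ((s⁻¹ * lam - 1) * y₂))) := by
        simp_rw [step2]
    _ = ∑ s : F, ∑ y₁ : F, ∑ y₂ : F, (if s = 0 then 0 else
          (χ⁻¹ y₁ * ψ ((s - 1) * y₁)) * (η⁻¹ y₂ * ψ ((s⁻¹ * lam - 1) * y₂))) := by
        exact (Finset.sum_congr rfl fun y₁ _ => Finset.sum_comm).trans Finset.sum_comm
    _ = ∑ s : F, gaussSum χ⁻¹ ψ * gaussSum η⁻¹ ψ * (χ (s - 1) * (η (lam - s) * η⁻¹ s)) := by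
        simp_rw [step3]
    _ = gaussSum χ⁻¹ ψ * gaussSum η⁻¹ ψ * ∑ s : F, χ (s - 1) * (η (lam - s) * η⁻¹ s) := by
        rw [← Finset.mul_sum]

lemma gauss_mul_gauss_inv (χ : MulChar F ℂ) (hχ : χ ≠ 1) (ψ : AddChar F ℂ) (hψ : ψ ≠ 1) :
    gaussSum χ ψ * gaussSum χ⁻¹ ψ = χ (-1) * (Fintype.card F : ℂ) := by
  have h2 := mul_gaussSum_inv_eq_gaussSum χ⁻¹ ψ
  have h1 := gaussSum_mul_gaussSum_eq_card hχ (AddChar.IsPrimitive.of_ne_one hψ)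
  rw [← h2, ← mul_assoc, mul_comm (gaussSum χ ψ), mul_assoc, h1, MulChar.inv_apply']
  norm_num

end Aux


/-- Let `q` be an odd prime power, `F = 𝔽_q`, `E = 𝔽_{q²}` a quadratic
extension, `ω ∈ E \ F` with `ω² ∈ F` (witnessed by `w2 : F`). Let `χ, η` be non-trivial
multiplicative characters of `F`, `ψ` a non-trivial additive character of `F` and `ρ` a
multiplicative character of `E`. With
`S(χ,η;ρ) = Σ_α ρ(α+ω) Σ_t χ(t) η(α²−ω²t) η̄(1−t)` and
`Hsum(t) = Σ_{x₁x₂ = t·y₁y₂, all in F^×} ψ(x₁+x₂−y₁−y₂) χ̄(y₁) η̄(y₂)`, one has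
`q² · S(χ,η;ρ) = η(ω²) · τ(χ,ψ) · τ(η,ψ) · Σ_α ρ(α+ω) Hsum(1 − α²ω⁻²)`. -/
theorem S_eq_gauss_mul_twisted_hypergeometric
    (F E : Type*) [Field F] [Fintype F] [DecidableEq F] [Field E] [Fintype E] [Algebra F E]
    (q : ℕ) (hq : Odd q) (hFq : Fintype.card F = q) (hEq : Fintype.card E = q ^ 2)
    (ω : E) (hω : ω ∉ Set.range (algebraMap F E)) (w2 : F) (hw2 : algebraMap F E w2 = ω ^ 2)
    (χ η : MulChar F ℂ) (hχ : χ ≠ 1) (hη : η ≠ 1)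
    (ψ : AddChar F ℂ) (hψ : ψ ≠ 1) (ρ : MulChar E ℂ) :
    (q : ℂ) ^ 2 * ∑ α : F, ρ (algebraMap F E α + ω) *
        ∑ t : F, χ t * η (α ^ 2 - w2 * t) * (starRingEnd ℂ) (η (1 - t)) =
      η w2 * gaussSum χ ψ * gaussSum η ψ *
        ∑ α : F, ρ (algebraMap F E α + ω) *
          ∑ x₁ : F, ∑ x₂ : F, ∑ y₁ : F, ∑ y₂ : F,
            if x₁ ≠ 0 ∧ x₂ ≠ 0 ∧ y₁ ≠ 0 ∧ y₂ ≠ 0 ∧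
                x₁ * x₂ = (1 - α ^ 2 * w2⁻¹) * (y₁ * y₂) then
              ψ (x₁ + x₂ - y₁ - y₂) * (starRingEnd ℂ) (χ y₁) * (starRingEnd ℂ) (η y₂)
            else 0 := by
  have hω0 : ω ≠ 0 := by
    rintro rfl
    exact hω ⟨0, by simp⟩
  have hw0 : w2 ≠ 0 := by
    rintro rfl
    rw [map_zero] at hw2
    exact hω0 ((pow_eq_zero_iff two_ne_zero).mp hw2.symm)
  have hlam : ∀ α : F, 1 - α ^ 2 * w2⁻¹ ≠ 0 := by
    intro α h
    have hα2 : α ^ 2 = w2 := by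
      field_simp at h
      exact (sub_eq_zero.mp (h.trans (mul_zero w2))).symm
    have hsq : (algebraMap F E α) ^ 2 = ω ^ 2 := by
      rw [← map_pow, hα2, hw2]
    have hfac : (algebraMap F E α - ω) * (algebraMap F E α + ω) = 0 := by
      linear_combination hsq
    rcases mul_eq_zero.mp hfac with h' | h'
    · exact hω ⟨α, (sub_eq_zero.mp h')⟩
    · exact hω ⟨-α, by rw [map_neg]; linear_combination -h'⟩
  have hcard : (Fintype.card F : ℂ) = (q : ℂ) := by exact_mod_cast congrArg Nat.cast hFq
  have hG1 : gaussSum χ ψ * gaussSum χ⁻¹ ψ = χ (-1) * (q : ℂ) := by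
    rw [gauss_mul_gauss_inv χ hχ ψ hψ, hcard]
  have hG2 : gaussSum η ψ * gaussSum η⁻¹ ψ = η (-1) * (q : ℂ) := by
    rw [gauss_mul_gauss_inv η hη ψ hψ, hcard]
  simp only [starRingEnd_apply, MulChar.star_apply']
  rw [Finset.mul_sum, Finset.mul_sum]
  refine Finset.sum_congr rfl fun α _ => ?_
  obtain ⟨lam, hlam0, hlamdef⟩ : ∃ lam : F, lam ≠ 0 ∧ lam = 1 - α ^ 2 * w2⁻¹ :=
    ⟨_, hlam α, rfl⟩
  rw [← hlamdef]
  have hrw : ∀ t : F, α ^ 2 - w2 * t = w2 * ((1 - lam) - t) := by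
    intro t
    rw [hlamdef]
    field_simp
    ring
  have key : (q : ℂ) ^ 2 * (∑ t : F, χ t * η (α ^ 2 - w2 * t) * η⁻¹ (1 - t))
      = η w2 * gaussSum χ ψ * gaussSum η ψ *
          ∑ x₁ : F, ∑ x₂ : F, ∑ y₁ : F, ∑ y₂ : F,
            (if x₁ ≠ 0 ∧ x₂ ≠ 0 ∧ y₁ ≠ 0 ∧ y₂ ≠ 0 ∧ x₁ * x₂ = lam * (y₁ * y₂) then
              ψ (x₁ + x₂ - y₁ - y₂) * χ⁻¹ y₁ * η⁻¹ y₂ else 0) := by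
    rw [hsum_eval χ η hχ hη ψ lam hlam0]
    simp_rw [hrw, map_mul]
    have hsqχ : χ (-1) * χ (-1) = 1 := by rw [← map_mul]; norm_num
    have hsqη : η (-1) * η (-1) = 1 := by rw [← map_mul]; norm_num
    have reidx : (∑ t : F, χ t * (η w2 * η ((1 - lam) - t)) * η⁻¹ (1 - t))
        = ∑ s : F, η w2 * (χ (-1) * η (-1)) * (χ (s - 1) * (η (lam - s) * η⁻¹ s)) := by
      refine Fintype.sum_bijective (fun t : F => 1 - t) (Equiv.subLeft (1 : F)).bijective
        (fun t => χ t * (η w2 * η ((1 - lam) - t)) * η⁻¹ (1 - t))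
        (fun s => η w2 * (χ (-1) * η (-1)) * (χ (s - 1) * (η (lam - s) * η⁻¹ s))) ?_
      intro t
      beta_reduce
      rw [show (1 : F) - t - 1 = -1 * t by ring,
        show lam - (1 - t) = -1 * ((1 - lam) - t) by ring, map_mul χ, map_mul η]
      linear_combination (-(χ t * η w2 * η ((1 - lam) - t) * η⁻¹ (1 - t) * η (-1) * η (-1)))
          * hsqχ - (χ t * η w2 * η ((1 - lam) - t) * η⁻¹ (1 - t)) * hsqη
    rw [reidx, ← Finset.mul_sum]
    linear_combination (-(η w2 * (∑ s : F, χ (s - 1) * (η (lam - s) * η⁻¹ s)) * gaussSum η ψ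
        * gaussSum η⁻¹ ψ)) * hG1
      - (η w2 * (∑ s : F, χ (s - 1) * (η (lam - s) * η⁻¹ s)) * χ (-1) * (q : ℂ)) * hG2
  linear_combination (ρ (algebraMap F E α + ω)) * key
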